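/- Let ψ : ℝ² → ℂ be twice continuously differentiable and let p = (p₁, p₂) ≠ (0, 0). Then (−D̂(D̂ψ) − Ĵ⁰(Ĵ⁰ψ) + Ĵ¹(Ĵ¹ψ) + Ĵ²(Ĵ²ψ))(p) = (1/4)·ψ(p), where (Ĵ⁰ψ)(p) = i·p₂·∂ψ/∂p₁ − i·p₁·∂ψ/∂p₂, (Ĵ¹ψ)(p) = −i·√(p₁² + p₂²)·∂ψ/∂p₂, (Ĵ²ψ)(p) = i·√(p₁² + p₂²)·∂ψ/∂p₁, and (D̂ψ)(p) = i·p₁·∂ψ/∂p₁ + i·p₂·∂ψ/∂p₂ + (i/2)·ψ(p). -/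

import Mathlib

open Complex

noncomputable def s18f1 (ψ : ℝ × ℝ → ℂ) (q : ℝ × ℝ) : ℂ := fderiv ℝ ψ q (1, 0)
noncomputable def s18f2 (ψ : ℝ × ℝ → ℂ) (q : ℝ × ℝ) : ℂ := fderiv ℝ ψ q (0, 1)

lemma s18lineD1 {f : ℝ × ℝ → ℂ} {q : ℝ × ℝ} (hf : DifferentiableAt ℝ f q) :
    HasDerivAt (fun t => f (t, q.2)) (fderiv ℝ f q ((1 : ℝ), (0 : ℝ))) q.1 := by
  have h : HasDerivAt (fun t : ℝ => (t, q.2)) ((1 : ℝ), (0 : ℝ)) q.1 :=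
    HasDerivAt.prodMk (hasDerivAt_id q.1) (hasDerivAt_const _ _)
  exact hf.hasFDerivAt.comp_hasDerivAt q.1 h

lemma s18lineD2 {f : ℝ × ℝ → ℂ} {q : ℝ × ℝ} (hf : DifferentiableAt ℝ f q) :
    HasDerivAt (fun t => f (q.1, t)) (fderiv ℝ f q ((0 : ℝ), (1 : ℝ))) q.2 := by
  have h : HasDerivAt (fun t : ℝ => (q.1, t)) ((0 : ℝ), (1 : ℝ)) q.2 :=
    HasDerivAt.prodMk (hasDerivAt_const _ _) (hasDerivAt_id q.2)
  exact hf.hasFDerivAt.comp_hasDerivAt q.2 h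

lemma s18c1 {ψ : ℝ × ℝ → ℂ} (hψ : ContDiff ℝ 2 ψ) : ContDiff ℝ 1 (s18f1 ψ) :=
  (hψ.fderiv_right (by norm_num)).clm_apply contDiff_const

lemma s18c2 {ψ : ℝ × ℝ → ℂ} (hψ : ContDiff ℝ 2 ψ) : ContDiff ℝ 1 (s18f2 ψ) :=
  (hψ.fderiv_right (by norm_num)).clm_apply contDiff_const

lemma s18symm {ψ : ℝ × ℝ → ℂ} (hψ : ContDiff ℝ 2 ψ) (p : ℝ × ℝ) :
    fderiv ℝ (s18f1 ψ) p ((0:ℝ), (1:ℝ)) = fderiv ℝ (s18f2 ψ) p ((1:ℝ), (0:ℝ)) := by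
  have hd : DifferentiableAt ℝ (fderiv ℝ ψ) p :=
    ((hψ.fderiv_right (m := 1) le_rfl).differentiable (by norm_num)).differentiableAt
  have h1 : fderiv ℝ (s18f1 ψ) p = (fderiv ℝ (fderiv ℝ ψ) p).flip ((1:ℝ), (0:ℝ)) := by
    rw [show s18f1 ψ = fun q => (fderiv ℝ ψ q) ((fun _ : ℝ × ℝ => ((1:ℝ),(0:ℝ))) q) from rfl,
      fderiv_clm_apply hd (differentiableAt_const _)]
    simp
  have h2 : fderiv ℝ (s18f2 ψ) p = (fderiv ℝ (fderiv ℝ ψ) p).flip ((0:ℝ), (1:ℝ)) := by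
    rw [show s18f2 ψ = fun q => (fderiv ℝ ψ q) ((fun _ : ℝ × ℝ => ((0:ℝ),(1:ℝ))) q) from rfl,
      fderiv_clm_apply hd (differentiableAt_const _)]
    simp
  have hs := (hψ.contDiffAt (x := p)).isSymmSndFDerivAt (by norm_num)
  rw [h1, h2]
  exact hs _ _

theorem stmt18 (ψ : ℝ × ℝ → ℂ) (hψ : ContDiff ℝ 2 ψ) (p : ℝ × ℝ)
    (hp : p ≠ (0, 0)) :
    let d1 : (ℝ × ℝ → ℂ) → ℝ × ℝ → ℂ := fun f q => deriv (fun t => f (t, q.2)) q.1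
    let d2 : (ℝ × ℝ → ℂ) → ℝ × ℝ → ℂ := fun f q => deriv (fun t => f (q.1, t)) q.2
    let r : ℝ × ℝ → ℝ := fun q => Real.sqrt (q.1 ^ 2 + q.2 ^ 2)
    let J0 : (ℝ × ℝ → ℂ) → ℝ × ℝ → ℂ := fun f q =>
      Complex.I * (q.2 : ℂ) * d1 f q - Complex.I * (q.1 : ℂ) * d2 f q
    let J1 : (ℝ × ℝ → ℂ) → ℝ × ℝ → ℂ := fun f q => -Complex.I * (r q : ℂ) * d2 f q
    let J2 : (ℝ × ℝ → ℂ) → ℝ × ℝ → ℂ := fun f q => Complex.I * (r q : ℂ) * d1 f q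
    let D : (ℝ × ℝ → ℂ) → ℝ × ℝ → ℂ := fun f q =>
      Complex.I * (q.1 : ℂ) * d1 f q + Complex.I * (q.2 : ℂ) * d2 f q +
        Complex.I / 2 * f q
    (-D (D ψ) p - J0 (J0 ψ) p + J1 (J1 ψ) p + J2 (J2 ψ) p = 1 / 4 * ψ p) := by
  intro d1 d2 r J0 J1 J2 D
  have hψd : Differentiable ℝ ψ := hψ.differentiable (by norm_num)
  have hf1d : Differentiable ℝ (s18f1 ψ) := (s18c1 hψ).differentiable (by norm_num)
  have hf2d : Differentiable ℝ (s18f2 ψ) := (s18c2 hψ).differentiable (by norm_num)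
  have hd1ψ : d1 ψ = s18f1 ψ := funext fun q => (s18lineD1 (hψd q)).deriv
  have hd2ψ : d2 ψ = s18f2 ψ := funext fun q => (s18lineD2 (hψd q)).deriv
  have pos : 0 < p.1 ^ 2 + p.2 ^ 2 := by
    have h : p.1 ≠ 0 ∨ p.2 ≠ 0 := by
      by_contra h; push_neg at h; exact hp (Prod.ext h.1 h.2)
    rcases h with h | h <;> positivity
  set ra : ℝ := Real.sqrt (p.1 ^ 2 + p.2 ^ 2) with hra_def
  have hra : ra ≠ 0 := ne_of_gt (Real.sqrt_pos.mpr pos)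
  have hr2 : ra ^ 2 = p.1 ^ 2 + p.2 ^ 2 := Real.sq_sqrt pos.le
  -- point values
  set F1 : ℂ := s18f1 ψ p with hF1
  set F2 : ℂ := s18f2 ψ p with hF2
  set F11 : ℂ := fderiv ℝ (s18f1 ψ) p ((1:ℝ), (0:ℝ)) with hF11
  set F12 : ℂ := fderiv ℝ (s18f1 ψ) p ((0:ℝ), (1:ℝ)) with hF12
  set F21 : ℂ := fderiv ℝ (s18f2 ψ) p ((1:ℝ), (0:ℝ)) with hF21
  set F22 : ℂ := fderiv ℝ (s18f2 ψ) p ((0:ℝ), (1:ℝ)) with hF22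
  have hsym : F12 = F21 := s18symm hψ p
  -- basic derivative facts at p
  have h1ψ : HasDerivAt (fun t => ψ (t, p.2)) F1 p.1 := s18lineD1 (hψd p)
  have h2ψ : HasDerivAt (fun t => ψ (p.1, t)) F2 p.2 := s18lineD2 (hψd p)
  have h11 : HasDerivAt (fun t => s18f1 ψ (t, p.2)) F11 p.1 := s18lineD1 (hf1d p)
  have h12 : HasDerivAt (fun t => s18f1 ψ (p.1, t)) F12 p.2 := s18lineD2 (hf1d p)
  have h21 : HasDerivAt (fun t => s18f2 ψ (t, p.2)) F21 p.1 := s18lineD1 (hf2d p)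
  have h22 : HasDerivAt (fun t => s18f2 ψ (p.1, t)) F22 p.2 := s18lineD2 (hf2d p)
  have htI1 : HasDerivAt (fun t : ℝ => Complex.I * (t : ℂ)) Complex.I p.1 := by
    simpa using ((hasDerivAt_id p.1).ofReal_comp.const_mul Complex.I)
  have htI2 : HasDerivAt (fun t : ℝ => Complex.I * (t : ℂ)) Complex.I p.2 := by
    simpa using ((hasDerivAt_id p.2).ofReal_comp.const_mul Complex.I)
  have hre1 : HasDerivAt (fun t : ℝ => Real.sqrt (t ^ 2 + p.2 ^ 2)) (p.1 / ra) p.1 := by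
    have hin : HasDerivAt (fun t : ℝ => t ^ 2 + p.2 ^ 2) (2 * p.1) p.1 := by
      simpa using (hasDerivAt_pow 2 p.1).add_const (p.2 ^ 2)
    have := (Real.hasDerivAt_sqrt (ne_of_gt pos)).comp p.1 hin
    refine this.congr_deriv ?_
    rw [← hra_def, one_div_mul_eq_div, mul_div_mul_left _ _ two_ne_zero]
  have hre2 : HasDerivAt (fun t : ℝ => Real.sqrt (p.1 ^ 2 + t ^ 2)) (p.2 / ra) p.2 := by
    have hin : HasDerivAt (fun t : ℝ => p.1 ^ 2 + t ^ 2) (2 * p.2) p.2 := by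
      simpa using (hasDerivAt_pow 2 p.2).const_add (p.1 ^ 2)
    have := (Real.hasDerivAt_sqrt (ne_of_gt pos)).comp p.2 hin
    refine this.congr_deriv ?_
    rw [← hra_def, one_div_mul_eq_div, mul_div_mul_left _ _ two_ne_zero]
  -- function identities
  have hDψ : D ψ = fun q => Complex.I * q.1 * s18f1 ψ q + Complex.I * q.2 * s18f2 ψ q +
      Complex.I / 2 * ψ q := by
    funext q; simp only [D, hd1ψ, hd2ψ]
  have hJ0ψ : J0 ψ = fun q => Complex.I * q.2 * s18f1 ψ q - Complex.I * q.1 * s18f2 ψ q := by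
    funext q; simp only [J0, hd1ψ, hd2ψ]
  have hJ1ψ : J1 ψ = fun q => -Complex.I * (Real.sqrt (q.1 ^ 2 + q.2 ^ 2) : ℂ) *
      s18f2 ψ q := by
    funext q; simp only [J1, r, hd2ψ]
  have hJ2ψ : J2 ψ = fun q => Complex.I * (Real.sqrt (q.1 ^ 2 + q.2 ^ 2) : ℂ) *
      s18f1 ψ q := by
    funext q; simp only [J2, r, hd1ψ]
  -- the six derivative computations
  have hdD1 : d1 (D ψ) p = (Complex.I * F1 + Complex.I * (p.1 : ℂ) * F11) +
      Complex.I * (p.2 : ℂ) * F21 + Complex.I / 2 * F1 := by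
    show deriv (fun t => D ψ (t, p.2)) p.1 = _
    rw [hDψ]
    exact (((htI1.mul h11).add (h21.const_mul (Complex.I * (p.2 : ℂ)))).add
      (h1ψ.const_mul (Complex.I / 2))).deriv
  have hdD2 : d2 (D ψ) p = Complex.I * (p.1 : ℂ) * F12 +
      (Complex.I * F2 + Complex.I * (p.2 : ℂ) * F22) + Complex.I / 2 * F2 := by
    show deriv (fun t => D ψ (p.1, t)) p.2 = _
    rw [hDψ]
    exact (((h12.const_mul (Complex.I * (p.1 : ℂ))).add (htI2.mul h22)).add
      (h2ψ.const_mul (Complex.I / 2))).deriv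
  have hdJ01 : d1 (J0 ψ) p = Complex.I * (p.2 : ℂ) * F11 -
      (Complex.I * F2 + Complex.I * (p.1 : ℂ) * F21) := by
    show deriv (fun t => J0 ψ (t, p.2)) p.1 = _
    rw [hJ0ψ]
    exact ((h11.const_mul (Complex.I * (p.2 : ℂ))).sub (htI1.mul h21)).deriv
  have hdJ02 : d2 (J0 ψ) p = (Complex.I * F1 + Complex.I * (p.2 : ℂ) * F12) -
      Complex.I * (p.1 : ℂ) * F22 := by
    show deriv (fun t => J0 ψ (p.1, t)) p.2 = _
    rw [hJ0ψ]
    exact ((htI2.mul h12).sub (h22.const_mul (Complex.I * (p.1 : ℂ)))).deriv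
  have hdJ1 : d2 (J1 ψ) p = (-Complex.I * ((p.2 / ra : ℝ) : ℂ)) * F2 +
      (-Complex.I * (ra : ℂ)) * F22 := by
    show deriv (fun t => J1 ψ (p.1, t)) p.2 = _
    rw [hJ1ψ]
    exact ((hre2.ofReal_comp.const_mul (-Complex.I)).mul h22).deriv
  have hdJ2 : d1 (J2 ψ) p = (Complex.I * ((p.1 / ra : ℝ) : ℂ)) * F1 +
      (Complex.I * (ra : ℂ)) * F11 := by
    show deriv (fun t => J2 ψ (t, p.2)) p.1 = _
    rw [hJ2ψ]
    exact ((hre1.ofReal_comp.const_mul Complex.I).mul h11).deriv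
  -- assemble
  have hDval : D ψ p = Complex.I * (p.1 : ℂ) * F1 + Complex.I * (p.2 : ℂ) * F2 +
      Complex.I / 2 * ψ p := by rw [hDψ]
  show -(Complex.I * (p.1 : ℂ) * d1 (D ψ) p + Complex.I * (p.2 : ℂ) * d2 (D ψ) p +
      Complex.I / 2 * D ψ p) -
      (Complex.I * (p.2 : ℂ) * d1 (J0 ψ) p - Complex.I * (p.1 : ℂ) * d2 (J0 ψ) p) +
      -Complex.I * (ra : ℂ) * d2 (J1 ψ) p + Complex.I * (ra : ℂ) * d1 (J2 ψ) p =
      1 / 4 * ψ p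
  rw [hdD1, hdD2, hdJ01, hdJ02, hdJ1, hdJ2, hDval, hsym]
  have hra' : (ra : ℂ) ≠ 0 := Complex.ofReal_ne_zero.mpr hra
  have hr2c : (ra : ℂ) ^ 2 = (p.1 : ℂ) ^ 2 + (p.2 : ℂ) ^ 2 := by exact_mod_cast hr2
  push_cast
  field_simp
  linear_combination (16 * Complex.I ^ 2 * (F11 + F22)) * hr2c +
    (-4 * ψ p) * Complex.I_sq
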